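/- arXiv:1401.3065 — 4 statements merged into one kernel-verified Lean document; each statement's English description precedes it below -/
import Mathlib

section
/- Fix integers 0 ≤ a ≤ b ≤ n and let ζ = exp(πi/6) ∈ ℂ. Suppose (C^w_{u,v}) and (D^w_{u,v}) are two families of polynomials in ℂ[δ₀,δ₁,δ₂,y₁,…,y_n], indexed by triples (u,v,w) of 012-strings for Fl(a,b;n), and both families satisfy: (i) C^w_{w,w} = ∏_{i<j, w_i>w_j} (y_j − y_i) for every 012-string w, and (ii) (C_u ζ^{11} + C_v ζ^{7} + C_w ζ^{3})·C^w_{u,v} = ζ^5 Σ_{u→u′} δ(u/u′)·C^w_{u′,v} + ζ Σ_{v→v′} δ(v/v′)·C^w_{u,v′} + ζ^9 Σ_{w′→w} δ(w′/w)·C^{w′}_{u,v} for all triples (u,v,w). Then C^w_{u,v} = D^w_{u,v} for all 012-strings u, v, w. -/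
/-!
STATEMENT 0: Fix 0 ≤ a ≤ b ≤ n and ζ = exp(πi/6).  If two families of
polynomials C^w_{u,v}, D^w_{u,v} in ℂ[δ₀,δ₁,δ₂,y₁,…,y_n], indexed by triples
of 012-strings for Fl(a,b;n), both satisfy
(i)  C^w_{w,w} = ∏_{i<j, w_i>w_j} (y_j − y_i), and
(ii) (C_u ζ^{11} + C_v ζ^{7} + C_w ζ^{3})·C^w_{u,v}
       = ζ^5 Σ_{u→u′} δ(u/u′) C^w_{u′,v} + ζ Σ_{v→v′} δ(v/v′) C^w_{u,v′}
         + ζ^9 Σ_{w′→w} δ(w′/w) C^{w′}_{u,v},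
then the two families coincide.  (`Cf u v w` denotes C^w_{u,v}.)
-/
set_option maxHeartbeats 1000000
open scoped Classical

namespace TwoStep

variable (n a b : ℕ)

/-- 012-strings for the two-step flag variety Fl(a,b;n): sequences in
{0,1,2}^n with exactly `a` zeros, `b - a` ones and `n - b` twos. -/
def Str : Type :=
  {s : Fin n → Fin 3 //
    (Finset.univ.filter fun i => s i = 0).card = a ∧
    (Finset.univ.filter fun i => s i = 1).card = b - a ∧
    (Finset.univ.filter fun i => s i = 2).card = n - b}

noncomputable instance : Fintype (Str n a b) := by
  unfold Str; exact Fintype.ofFinite _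

/-- The coefficient ring ℂ[δ₀,δ₁,δ₂,y₁,…,y_n]. -/
abbrev Rng := MvPolynomial (Fin 3 ⊕ Fin n) ℂ

/-- ζ = exp(π i / 6). -/
noncomputable def zet : ℂ := Complex.exp ((Real.pi : ℂ) * Complex.I / 6)

/-- The variable δ_j. -/
noncomputable def dvar (j : Fin 3) : Rng n := MvPolynomial.X (Sum.inl j)

/-- The variable y_i. -/
noncomputable def yvar (i : Fin n) : Rng n := MvPolynomial.X (Sum.inr i)

/-- C_u = Σ_i δ_{u_i} y_i. -/
noncomputable def Cstr (u : Str n a b) : Rng n :=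
  ∑ i : Fin n, dvar n (u.1 i) * yvar n i

/-- Bruhat covers `u → u'`: `u'` is obtained from `u` by replacing a
connected subsequence `(0,2,…,2,1)` by `(1,2,…,2,0)`, or `(0,2)` by
`(2,0)`, or `(1,0,…,0,2)` by `(2,0,…,0,1)`. -/
def Cover (u u' : Str n a b) : Prop :=
  ∃ i j : Fin n, i < j ∧ (∀ k, k ≠ i → k ≠ j → u'.1 k = u.1 k) ∧
    ((u.1 i = 0 ∧ u.1 j = 1 ∧ u'.1 i = 1 ∧ u'.1 j = 0 ∧
        ∀ k, i < k → k < j → u.1 k = 2) ∨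
     ((j : ℕ) = (i : ℕ) + 1 ∧ u.1 i = 0 ∧ u.1 j = 2 ∧ u'.1 i = 2 ∧ u'.1 j = 0) ∨
     (u.1 i = 1 ∧ u.1 j = 2 ∧ u'.1 i = 2 ∧ u'.1 j = 1 ∧
        ∀ k, i < k → k < j → u.1 k = 0))

/-- δ(u/u') = δ_{u_i} − δ_{u'_i}, where `i` is the least index at which `u`
and `u'` differ (and `0` if they agree everywhere). -/
noncomputable def covDelta (u u' : Str n a b) : Rng n :=
  if h : (Finset.univ.filter fun i => u.1 i ≠ u'.1 i).Nonempty then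
    dvar n (u.1 ((Finset.univ.filter fun i => u.1 i ≠ u'.1 i).min' h)) -
      dvar n (u'.1 ((Finset.univ.filter fun i => u.1 i ≠ u'.1 i).min' h))
  else 0

/-- The family `Cf` (with `Cf u v w` meaning `C^w_{u,v}`) satisfies the
identities (i) (extreme case, Kostant–Kumar) and (ii) (recursion). -/
noncomputable def SatisfiesRecursion
    (Cf : Str n a b → Str n a b → Str n a b → Rng n) : Prop :=
  (∀ w : Str n a b, Cf w w w =
      ∏ p ∈ Finset.univ.filter
          (fun p : Fin n × Fin n => p.1 < p.2 ∧ w.1 p.2 < w.1 p.1),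
        (yvar n p.2 - yvar n p.1)) ∧
  (∀ u v w : Str n a b,
    (Cstr n a b u * MvPolynomial.C (zet ^ 11) +
        Cstr n a b v * MvPolynomial.C (zet ^ 7) +
        Cstr n a b w * MvPolynomial.C (zet ^ 3)) * Cf u v w =
      MvPolynomial.C (zet ^ 5) *
          ∑ u' ∈ Finset.univ.filter (fun u' => Cover n a b u u'),
            covDelta n a b u u' * Cf u' v w +
        MvPolynomial.C zet *
          ∑ v' ∈ Finset.univ.filter (fun v' => Cover n a b v v'),
            covDelta n a b v v' * Cf u v' w +
        MvPolynomial.C (zet ^ 9) *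
          ∑ w' ∈ Finset.univ.filter (fun w' => Cover n a b w' w),
            covDelta n a b w' w * Cf u v w')


/-! ### Auxiliary lemmas -/

/-- A weight statistic that strictly increases along Bruhat covers. -/
def wt (u : Str n a b) : ℕ := ∑ i : Fin n, (i : ℕ) * (2 - (u.1 i : ℕ))

lemma wt_le (u : Str n a b) : wt n a b u ≤ ∑ i : Fin n, (i : ℕ) * 2 :=
  Finset.sum_le_sum fun i _ => Nat.mul_le_mul_left _ (Nat.sub_le _ _)

lemma wt_split (s : Fin n → Fin 3) {i j : Fin n} (hij : i ≠ j) :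
    ∑ k : Fin n, (k : ℕ) * (2 - (s k : ℕ)) =
      (i : ℕ) * (2 - (s i : ℕ)) + (j : ℕ) * (2 - (s j : ℕ)) +
        ∑ k ∈ (Finset.univ.erase i).erase j, (k : ℕ) * (2 - (s k : ℕ)) := by
  rw [← Finset.add_sum_erase _ _ (Finset.mem_univ i),
    ← Finset.add_sum_erase _ _ (Finset.mem_erase.2 ⟨hij.symm, Finset.mem_univ j⟩)]
  ring

lemma wt_lt_of_cover {u u' : Str n a b} (h : Cover n a b u u') :
    wt n a b u < wt n a b u' := by
  obtain ⟨i, j, hij, hoth, hcase⟩ := h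
  have hne : i ≠ j := ne_of_lt hij
  have hijn : (i : ℕ) < (j : ℕ) := hij
  unfold wt
  rw [wt_split n u.1 hne, wt_split n u'.1 hne]
  have hrest : ∑ k ∈ (Finset.univ.erase i).erase j, (k : ℕ) * (2 - (u'.1 k : ℕ)) =
      ∑ k ∈ (Finset.univ.erase i).erase j, (k : ℕ) * (2 - (u.1 k : ℕ)) := by
    refine Finset.sum_congr rfl fun k hk => ?_
    rw [Finset.mem_erase, Finset.mem_erase] at hk
    rw [hoth k hk.2.1 hk.1]
  rw [hrest]
  have : (i : ℕ) * (2 - (u.1 i : ℕ)) + (j : ℕ) * (2 - (u.1 j : ℕ)) <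
      (i : ℕ) * (2 - (u'.1 i : ℕ)) + (j : ℕ) * (2 - (u'.1 j : ℕ)) := by
    rcases hcase with ⟨h1, h2, h3, h4, -⟩ | ⟨-, h1, h2, h3, h4⟩ | ⟨h1, h2, h3, h4, -⟩ <;>
      rw [h1, h2, h3, h4] <;> simp <;> omega
  omega

lemma zet_ne_zero : zet ≠ 0 := Complex.exp_ne_zero _

lemma zet_sq_ne_one : zet ^ 2 ≠ 1 := by
  unfold zet
  rw [← Complex.exp_nat_mul]
  intro hc
  rw [Complex.exp_eq_one_iff] at hc
  obtain ⟨k, hk⟩ := hc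
  have hpi : (Real.pi : ℂ) ≠ 0 := by exact_mod_cast Real.pi_ne_zero
  have hI : Complex.I ≠ 0 := Complex.I_ne_zero
  have h2 : (2 : ℂ) * ((Real.pi : ℂ) * Complex.I) =
      (12 * k) * ((Real.pi : ℂ) * Complex.I) := by
    linear_combination 6 * hk
  have h3 : (2 : ℂ) = 12 * k := mul_right_cancel₀ (mul_ne_zero hpi hI) h2
  have : (2 : ℤ) = 12 * k := by exact_mod_cast h3
  omega

lemma zet_pow8 : zet ^ 8 = - zet ^ 2 := by
  have h6 : zet ^ 6 = -1 := by
    unfold zet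
    rw [← Complex.exp_nat_mul]
    rw [show ((6 : ℕ) : ℂ) * ((Real.pi : ℂ) * Complex.I / 6) =
        (Real.pi : ℂ) * Complex.I by push_cast; ring]
    exact Complex.exp_pi_mul_I
  calc zet ^ 8 = zet ^ 6 * zet ^ 2 := by ring
  _ = - zet ^ 2 := by rw [h6]; ring

lemma zet_key : zet ^ 11 + zet ^ 3 ≠ 0 := by
  have h : zet ^ 11 + zet ^ 3 = zet ^ 3 * (1 - zet ^ 2) := by
    have h' : zet ^ 11 = zet ^ 3 * zet ^ 8 := by ring
    rw [h', zet_pow8]; ring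
  rw [h]
  exact mul_ne_zero (pow_ne_zero _ zet_ne_zero) (sub_ne_zero.2 (Ne.symm zet_sq_ne_one))

/-- Evaluation picking out coordinate `i` with δ-target `t`. -/
noncomputable def ev (t : Fin 3) (i : Fin n) : (Fin 3 ⊕ Fin n) → ℂ :=
  Sum.elim (fun d => if d = t then 1 else 0) (fun k => if k = i then 1 else 0)

lemma eval_Cstr (u : Str n a b) (t : Fin 3) (i : Fin n) :
    MvPolynomial.eval (ev n t i) (Cstr n a b u) = if u.1 i = t then 1 else 0 := by
  unfold Cstr dvar yvar ev
  rw [map_sum]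
  rw [Finset.sum_eq_single i]
  · simp
  · intro k _ hk
    simp [hk]
  · simp

lemma prefactor_ne_zero {u v w : Str n a b} (h : ¬(u = v ∧ v = w)) :
    Cstr n a b u * MvPolynomial.C (zet ^ 11) + Cstr n a b v * MvPolynomial.C (zet ^ 7) +
      Cstr n a b w * MvPolynomial.C (zet ^ 3) ≠ 0 := by
  intro h0
  obtain ⟨i, t, hsum⟩ : ∃ (i : Fin n) (t : Fin 3),
      (if u.1 i = t then zet ^ 11 else 0) + (if v.1 i = t then zet ^ 7 else 0) +
        (if w.1 i = t then zet ^ 3 else 0) ≠ 0 := by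
    by_cases huv : u = v
    · have hvw : v ≠ w := fun hvw => h ⟨huv, hvw⟩
      have hvw' : v.1 ≠ w.1 := fun hh => hvw (Subtype.ext hh)
      obtain ⟨i, hi⟩ := Function.ne_iff.1 hvw'
      refine ⟨i, w.1 i, ?_⟩
      rw [huv]
      simp [hi, if_neg hi]
      exact zet_ne_zero
    · have huv' : u.1 ≠ v.1 := fun hh => huv (Subtype.ext hh)
      obtain ⟨i, hi⟩ := Function.ne_iff.1 huv'
      refine ⟨i, u.1 i, ?_⟩
      rw [if_pos rfl, if_neg (fun hh => hi hh.symm)]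
      by_cases hw : w.1 i = u.1 i
      · rw [if_pos hw]; simpa using zet_key
      · rw [if_neg hw]; simpa using pow_ne_zero 11 zet_ne_zero
  apply hsum
  have := congrArg (MvPolynomial.eval (ev n t i)) h0
  simpa [eval_Cstr, mul_comm] using this

theorem recursion_determines_constants (hab : a ≤ b) (hbn : b ≤ n)
    (Cf Df : Str n a b → Str n a b → Str n a b → Rng n)
    (hC : SatisfiesRecursion n a b Cf) (hD : SatisfiesRecursion n a b Df) :
    ∀ u v w, Cf u v w = Df u v w := by
  set W := ∑ i : Fin n, (i : ℕ) * 2 with hW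
  suffices H : ∀ N : ℕ, ∀ u v w : Str n a b,
      (W - wt n a b u) + (W - wt n a b v) + wt n a b w < N → Cf u v w = Df u v w by
    intro u v w; exact H _ u v w (Nat.lt_succ_self _)
  intro N
  induction N with
  | zero => intro u v w h; omega
  | succ N ih =>
    intro u v w hmu
    by_cases heq : u = v ∧ v = w
    · obtain ⟨rfl, rfl⟩ := heq
      rw [hC.1, hD.1]
    · have hc := hC.2 u v w
      have hd := hD.2 u v w
      have hu : ∀ u' ∈ Finset.univ.filter (fun u' => Cover n a b u u'),
          covDelta n a b u u' * Cf u' v w = covDelta n a b u u' * Df u' v w := by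
        intro u' hu'
        have h1 := wt_lt_of_cover n a b (Finset.mem_filter.1 hu').2
        have h2 := wt_le n a b u'
        rw [ih u' v w (by omega)]
      have hv : ∀ v' ∈ Finset.univ.filter (fun v' => Cover n a b v v'),
          covDelta n a b v v' * Cf u v' w = covDelta n a b v v' * Df u v' w := by
        intro v' hv'
        have h1 := wt_lt_of_cover n a b (Finset.mem_filter.1 hv').2
        have h2 := wt_le n a b v'
        rw [ih u v' w (by omega)]
      have hw : ∀ w' ∈ Finset.univ.filter (fun w' => Cover n a b w' w),
          covDelta n a b w' w * Cf u v w' = covDelta n a b w' w * Df u v w' := by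
        intro w' hw'
        have h1 := wt_lt_of_cover n a b (Finset.mem_filter.1 hw').2
        rw [ih u v w' (by omega)]
      rw [Finset.sum_congr rfl hu, Finset.sum_congr rfl hv, Finset.sum_congr rfl hw,
        ← hd] at hc
      exact mul_left_cancel₀ (prefactor_ne_zero n a b heq) hc


end TwoStep
end

section
/- Every temporary puzzle piece has exactly three resolutions; equivalently, for a temporary puzzle piece with (left, right, bottom) labels (x, y, z), the labels x′, x″, y′, y″, z′, z″ appearing in the definition of a temporary piece are uniquely determined by (x, y, z). -/
/-!
STATEMENT 7: Every temporary puzzle piece has exactly three resolutions;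
equivalently, the labels x′, x″, y′, y″, z′, z″ occurring in the definition
of a temporary puzzle piece are uniquely determined by (x, y, z).
-/

set_option maxHeartbeats 1000000

open scoped Classical

/-- Puzzle labels are encoded as natural numbers; the meaningful ones are
0–7, and 0, 1, 2 are the *simple* labels. -/
abbrev Label := ℕ

/-- The valid upward triangular puzzle pieces in standard position,
as (left, right, bottom) label triples. -/
def basePieces : List (Label × Label × Label) :=
  [(0,0,0), (1,1,1), (2,2,2), (0,1,3), (1,2,4), (0,2,5), (3,2,6), (0,4,7)]

/-- Valid upward triangular pieces: the base list together with its
120° and 240° rotations. -/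
def ValidUp (l r b : Label) : Prop :=
  (l, r, b) ∈ basePieces ∨ (r, b, l) ∈ basePieces ∨ (b, l, r) ∈ basePieces

/-- Valid downward triangular pieces, with (left, right, top) labels:
precisely the rotations (by 60°, 180° or 300°) of valid upward pieces. -/
def ValidDown (l r t : Label) : Prop := ValidUp r l t

/-- Valid *vertical* equivariant (rhombus) puzzle pieces: opposite sides
carry equal labels, and `ValidEquivVert p q` means that the NW and SE sides
carry `p` while the NE and SW sides carry `q`, where `(p, q)` runs through
the paper's list of label pairs in its fixed orientation. -/
def ValidEquivVert (p q : Label) : Prop :=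
  (p, q) ∈ ([(0,1), (1,2), (0,2), (2,3), (0,4), (3,4), (0,6), (2,7)] :
    List (Label × Label))

lemma validUp_iff (a b c : Label) : ValidUp a b c ↔
    (a = 0 ∧ b = 0 ∧ c = 0 ∨
    a = 0 ∧ b = 1 ∧ c = 3 ∨
    a = 0 ∧ b = 2 ∧ c = 5 ∨
    a = 0 ∧ b = 4 ∧ c = 7 ∨
    a = 1 ∧ b = 1 ∧ c = 1 ∨
    a = 1 ∧ b = 2 ∧ c = 4 ∨
    a = 1 ∧ b = 3 ∧ c = 0 ∨
    a = 2 ∧ b = 2 ∧ c = 2 ∨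
    a = 2 ∧ b = 4 ∧ c = 1 ∨
    a = 2 ∧ b = 5 ∧ c = 0 ∨
    a = 2 ∧ b = 6 ∧ c = 3 ∨
    a = 3 ∧ b = 0 ∧ c = 1 ∨
    a = 3 ∧ b = 2 ∧ c = 6 ∨
    a = 4 ∧ b = 1 ∧ c = 2 ∨
    a = 4 ∧ b = 7 ∧ c = 0 ∨
    a = 5 ∧ b = 0 ∧ c = 2 ∨
    a = 6 ∧ b = 3 ∧ c = 2 ∨
    a = 7 ∧ b = 0 ∧ c = 4) := by
  constructor
  · intro h
    simp only [ValidUp, basePieces, List.mem_cons, List.not_mem_nil, or_false,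
      Prod.mk.injEq] at h
    rcases h with ((⟨rfl,rfl,rfl⟩|⟨rfl,rfl,rfl⟩|⟨rfl,rfl,rfl⟩|⟨rfl,rfl,rfl⟩|⟨rfl,rfl,rfl⟩|⟨rfl,rfl,rfl⟩|⟨rfl,rfl,rfl⟩|⟨rfl,rfl,rfl⟩)|(⟨rfl,rfl,rfl⟩|⟨rfl,rfl,rfl⟩|⟨rfl,rfl,rfl⟩|⟨rfl,rfl,rfl⟩|⟨rfl,rfl,rfl⟩|⟨rfl,rfl,rfl⟩|⟨rfl,rfl,rfl⟩|⟨rfl,rfl,rfl⟩)|(⟨rfl,rfl,rfl⟩|⟨rfl,rfl,rfl⟩|⟨rfl,rfl,rfl⟩|⟨rfl,rfl,rfl⟩|⟨rfl,rfl,rfl⟩|⟨rfl,rfl,rfl⟩|⟨rfl,rfl,rfl⟩|⟨rfl,rfl,rfl⟩))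
    all_goals decide
  · intro h
    rcases h with (⟨rfl,rfl,rfl⟩|⟨rfl,rfl,rfl⟩|⟨rfl,rfl,rfl⟩|⟨rfl,rfl,rfl⟩|⟨rfl,rfl,rfl⟩|⟨rfl,rfl,rfl⟩|⟨rfl,rfl,rfl⟩|⟨rfl,rfl,rfl⟩|⟨rfl,rfl,rfl⟩|⟨rfl,rfl,rfl⟩|⟨rfl,rfl,rfl⟩|⟨rfl,rfl,rfl⟩|⟨rfl,rfl,rfl⟩|⟨rfl,rfl,rfl⟩|⟨rfl,rfl,rfl⟩|⟨rfl,rfl,rfl⟩|⟨rfl,rfl,rfl⟩|⟨rfl,rfl,rfl⟩)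
    all_goals simp [ValidUp, basePieces]

theorem temp_witnesses_unique (x y z : Label)
    (x₁' x₁'' y₁' y₁'' z₁' z₁'' x₂' x₂'' y₂' y₂'' z₂' z₂'' : Label)
    (h11 : ValidUp x y₁' z₁'') (h12 : ValidUp x₁' y₁'' z)
    (h13 : ValidUp x₁'' y z₁') (h14 : ValidUp x₁' y₁' z₁')
    (h15 : ValidUp x₁'' y₁'' z₁'')
    (h21 : ValidUp x y₂' z₂'') (h22 : ValidUp x₂' y₂'' z)
    (h23 : ValidUp x₂'' y z₂') (h24 : ValidUp x₂' y₂' z₂')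
    (h25 : ValidUp x₂'' y₂'' z₂'') :
    x₁' = x₂' ∧ x₁'' = x₂'' ∧ y₁' = y₂' ∧ y₁'' = y₂'' ∧
      z₁' = z₂' ∧ z₁'' = z₂'' := by
  rw [validUp_iff] at h11 h12 h13 h14 h15 h21 h22 h23 h24 h25
  rcases h11 with ⟨e1,e2,e3⟩|⟨e1,e2,e3⟩|⟨e1,e2,e3⟩|⟨e1,e2,e3⟩|⟨e1,e2,e3⟩|⟨e1,e2,e3⟩|⟨e1,e2,e3⟩|⟨e1,e2,e3⟩|⟨e1,e2,e3⟩|⟨e1,e2,e3⟩|⟨e1,e2,e3⟩|⟨e1,e2,e3⟩|⟨e1,e2,e3⟩|⟨e1,e2,e3⟩|⟨e1,e2,e3⟩|⟨e1,e2,e3⟩|⟨e1,e2,e3⟩|⟨e1,e2,e3⟩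
  all_goals subst_vars
  all_goals rcases h14 with ⟨e1,e2,e3⟩|⟨e1,e2,e3⟩|⟨e1,e2,e3⟩|⟨e1,e2,e3⟩|⟨e1,e2,e3⟩|⟨e1,e2,e3⟩|⟨e1,e2,e3⟩|⟨e1,e2,e3⟩|⟨e1,e2,e3⟩|⟨e1,e2,e3⟩|⟨e1,e2,e3⟩|⟨e1,e2,e3⟩|⟨e1,e2,e3⟩|⟨e1,e2,e3⟩|⟨e1,e2,e3⟩|⟨e1,e2,e3⟩|⟨e1,e2,e3⟩|⟨e1,e2,e3⟩
  all_goals first | (exact absurd e1 (by decide)) | (exact absurd e2 (by decide)) | (exact absurd e3 (by decide)) | skip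
  all_goals subst_vars
  all_goals rcases h12 with ⟨e1,e2,e3⟩|⟨e1,e2,e3⟩|⟨e1,e2,e3⟩|⟨e1,e2,e3⟩|⟨e1,e2,e3⟩|⟨e1,e2,e3⟩|⟨e1,e2,e3⟩|⟨e1,e2,e3⟩|⟨e1,e2,e3⟩|⟨e1,e2,e3⟩|⟨e1,e2,e3⟩|⟨e1,e2,e3⟩|⟨e1,e2,e3⟩|⟨e1,e2,e3⟩|⟨e1,e2,e3⟩|⟨e1,e2,e3⟩|⟨e1,e2,e3⟩|⟨e1,e2,e3⟩
  all_goals first | (exact absurd e1 (by decide)) | (exact absurd e2 (by decide)) | (exact absurd e3 (by decide)) | skip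
  all_goals subst_vars
  all_goals rcases h15 with ⟨e1,e2,e3⟩|⟨e1,e2,e3⟩|⟨e1,e2,e3⟩|⟨e1,e2,e3⟩|⟨e1,e2,e3⟩|⟨e1,e2,e3⟩|⟨e1,e2,e3⟩|⟨e1,e2,e3⟩|⟨e1,e2,e3⟩|⟨e1,e2,e3⟩|⟨e1,e2,e3⟩|⟨e1,e2,e3⟩|⟨e1,e2,e3⟩|⟨e1,e2,e3⟩|⟨e1,e2,e3⟩|⟨e1,e2,e3⟩|⟨e1,e2,e3⟩|⟨e1,e2,e3⟩
  all_goals first | (exact absurd e1 (by decide)) | (exact absurd e2 (by decide)) | (exact absurd e3 (by decide)) | skip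
  all_goals subst_vars
  all_goals rcases h13 with ⟨e1,e2,e3⟩|⟨e1,e2,e3⟩|⟨e1,e2,e3⟩|⟨e1,e2,e3⟩|⟨e1,e2,e3⟩|⟨e1,e2,e3⟩|⟨e1,e2,e3⟩|⟨e1,e2,e3⟩|⟨e1,e2,e3⟩|⟨e1,e2,e3⟩|⟨e1,e2,e3⟩|⟨e1,e2,e3⟩|⟨e1,e2,e3⟩|⟨e1,e2,e3⟩|⟨e1,e2,e3⟩|⟨e1,e2,e3⟩|⟨e1,e2,e3⟩|⟨e1,e2,e3⟩
  all_goals first | (exact absurd e1 (by decide)) | (exact absurd e2 (by decide)) | (exact absurd e3 (by decide)) | skip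
  all_goals subst_vars
  all_goals rcases h21 with ⟨e1,e2,e3⟩|⟨e1,e2,e3⟩|⟨e1,e2,e3⟩|⟨e1,e2,e3⟩|⟨e1,e2,e3⟩|⟨e1,e2,e3⟩|⟨e1,e2,e3⟩|⟨e1,e2,e3⟩|⟨e1,e2,e3⟩|⟨e1,e2,e3⟩|⟨e1,e2,e3⟩|⟨e1,e2,e3⟩|⟨e1,e2,e3⟩|⟨e1,e2,e3⟩|⟨e1,e2,e3⟩|⟨e1,e2,e3⟩|⟨e1,e2,e3⟩|⟨e1,e2,e3⟩
  all_goals first | (exact absurd e1 (by decide)) | (exact absurd e2 (by decide)) | (exact absurd e3 (by decide)) | skip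
  all_goals subst_vars
  all_goals rcases h24 with ⟨e1,e2,e3⟩|⟨e1,e2,e3⟩|⟨e1,e2,e3⟩|⟨e1,e2,e3⟩|⟨e1,e2,e3⟩|⟨e1,e2,e3⟩|⟨e1,e2,e3⟩|⟨e1,e2,e3⟩|⟨e1,e2,e3⟩|⟨e1,e2,e3⟩|⟨e1,e2,e3⟩|⟨e1,e2,e3⟩|⟨e1,e2,e3⟩|⟨e1,e2,e3⟩|⟨e1,e2,e3⟩|⟨e1,e2,e3⟩|⟨e1,e2,e3⟩|⟨e1,e2,e3⟩
  all_goals first | (exact absurd e1 (by decide)) | (exact absurd e2 (by decide)) | (exact absurd e3 (by decide)) | skip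
  all_goals subst_vars
  all_goals rcases h22 with ⟨e1,e2,e3⟩|⟨e1,e2,e3⟩|⟨e1,e2,e3⟩|⟨e1,e2,e3⟩|⟨e1,e2,e3⟩|⟨e1,e2,e3⟩|⟨e1,e2,e3⟩|⟨e1,e2,e3⟩|⟨e1,e2,e3⟩|⟨e1,e2,e3⟩|⟨e1,e2,e3⟩|⟨e1,e2,e3⟩|⟨e1,e2,e3⟩|⟨e1,e2,e3⟩|⟨e1,e2,e3⟩|⟨e1,e2,e3⟩|⟨e1,e2,e3⟩|⟨e1,e2,e3⟩
  all_goals first | (exact absurd e1 (by decide)) | (exact absurd e2 (by decide)) | (exact absurd e3 (by decide)) | skip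
  all_goals subst_vars
  all_goals rcases h25 with ⟨e1,e2,e3⟩|⟨e1,e2,e3⟩|⟨e1,e2,e3⟩|⟨e1,e2,e3⟩|⟨e1,e2,e3⟩|⟨e1,e2,e3⟩|⟨e1,e2,e3⟩|⟨e1,e2,e3⟩|⟨e1,e2,e3⟩|⟨e1,e2,e3⟩|⟨e1,e2,e3⟩|⟨e1,e2,e3⟩|⟨e1,e2,e3⟩|⟨e1,e2,e3⟩|⟨e1,e2,e3⟩|⟨e1,e2,e3⟩|⟨e1,e2,e3⟩|⟨e1,e2,e3⟩
  all_goals first | (exact absurd e1 (by decide)) | (exact absurd e2 (by decide)) | (exact absurd e3 (by decide)) | skip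
  all_goals subst_vars
  all_goals rcases h23 with ⟨e1,e2,e3⟩|⟨e1,e2,e3⟩|⟨e1,e2,e3⟩|⟨e1,e2,e3⟩|⟨e1,e2,e3⟩|⟨e1,e2,e3⟩|⟨e1,e2,e3⟩|⟨e1,e2,e3⟩|⟨e1,e2,e3⟩|⟨e1,e2,e3⟩|⟨e1,e2,e3⟩|⟨e1,e2,e3⟩|⟨e1,e2,e3⟩|⟨e1,e2,e3⟩|⟨e1,e2,e3⟩|⟨e1,e2,e3⟩|⟨e1,e2,e3⟩|⟨e1,e2,e3⟩
  all_goals first | (exact absurd e1 (by decide)) | (exact absurd e2 (by decide)) | (exact absurd e3 (by decide)) | skip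
  all_goals subst_vars
  all_goals exact ⟨rfl, rfl, rfl, rfl, rfl, rfl⟩
end

section
/- Let P be a right-side-up equilateral triangle in the triangular lattice tiled by valid puzzle pieces (in any orientations) with matching labels on shared edges, and let u, v, w be the strings of labels on its left, right, and bottom border segments read left to right. If u and v are 012-strings for Fl(a,b;n) (each having exactly a zeros, b−a ones, and n−b twos), then w is also a 012-string for Fl(a,b;n); in particular, every label of w is simple. -/
/-!
STATEMENT 14: Let P be a right-side-up equilateral triangle of size n in
the triangular lattice, tiled by valid puzzle pieces (triangular or
equivariant, in any orientations) with matching labels on shared edges.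
If the strings of labels on the left and right border segments are
012-strings for Fl(a,b;n), then so is the string on the bottom border;
in particular every label of the bottom border is simple.
-/

set_option maxHeartbeats 1000000

open scoped Classical

/-- `s` (restricted to indices `0, …, n-1`) is a 012-string for `Fl(a,b;n)`:
exactly `a` zeros, `b - a` ones and `n - b` twos. -/
def Is012 (n a b : ℕ) (s : ℕ → ℕ) : Prop :=
  (∀ i, i < n → s i < 3) ∧
  ((Finset.range n).filter fun i => s i = 0).card = a ∧
  ((Finset.range n).filter fun i => s i = 1).card = b - a ∧
  ((Finset.range n).filter fun i => s i = 2).card = n - b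

/-- A triangle of size `n` tiled by valid puzzle pieces in arbitrary
orientations.  Upward cells `(x, y)` (with `x + y < n`) have left side
`ne x y`, right side `nw x y` and bottom side `hl x y`; downward cells
`(x, y)` (with `x + y + 1 < n`) have left side `nw x y`, right side
`ne (x+1) y` and top side `hl x (y+1)`.  `rh x y = some 0/1/2` records that
the upward cell `(x, y)` is merged with the downward neighbor across its
left/right/bottom side into an equivariant rhombus piece (whose internal
edge disappears, and whose opposite sides must carry equal labels and form
a valid equivariant piece in the corresponding rotation); `rh x y = none`
means the cell is a triangular piece.  Every downward cell is claimed by at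
most one merge, and unclaimed downward cells are valid downward triangles.
The left, right and bottom border segments are `ne 0 i`, `nw i (n-1-i)`
and `hl i 0` for `i < n`. -/
structure GenPuzzle (n : ℕ) where
  ne : ℕ → ℕ → Label
  nw : ℕ → ℕ → Label
  hl : ℕ → ℕ → Label
  rh : ℕ → ℕ → Option (Fin 3)
  rh_left : ∀ x y, rh x y = some 0 → 1 ≤ x ∧ x + y < n ∧
    nw (x-1) y = nw x y ∧ hl (x-1) (y+1) = hl x y ∧
    ValidEquivVert (nw x y) (hl x y)
  rh_right : ∀ x y, rh x y = some 1 → x + y + 1 < n ∧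
    hl x (y+1) = hl x y ∧ ne (x+1) y = ne x y ∧
    ValidEquivVert (hl x y) (ne x y)
  rh_bottom : ∀ x y, rh x y = some 2 → 1 ≤ y ∧ x + y < n ∧
    ne x y = ne (x+1) (y-1) ∧ nw x y = nw x (y-1) ∧
    ValidEquivVert (ne x y) (nw x y)
  up_tri : ∀ x y, x + y < n → rh x y = none →
    ValidUp (ne x y) (nw x y) (hl x y)
  dn_tri : ∀ x y, x + y + 1 < n →
    ¬ (rh x y = some 1) → ¬ (rh (x+1) y = some 0) → ¬ (rh x (y+1) = some 2) →
    ValidDown (nw x y) (ne (x+1) y) (hl x (y+1))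
  dn_once : ∀ x y, x + y + 1 < n →
    (rh x y = some 1 → rh (x+1) y ≠ some 0 ∧ rh x (y+1) ≠ some 2) ∧
    (rh (x+1) y = some 0 → rh x (y+1) ≠ some 2)
  rh_in : ∀ x y, ¬ x + y < n → rh x y = none


/- ===================== Auxiliary development ===================== -/

open Finset

section Aux

/-- Case analysis for `Option (Fin 3)`. -/
lemma rh_cases (o : Option (Fin 3)) : o = none ∨ o = some 0 ∨ o = some 1 ∨ o = some 2 := by
  rcases o with _ | k
  · exact Or.inl rfl
  · rcases k with ⟨v, hv⟩
    interval_cases v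
    · exact Or.inr (Or.inl rfl)
    · exact Or.inr (Or.inr (Or.inl rfl))
    · exact Or.inr (Or.inr (Or.inr rfl))

lemma validUp_lt (l r b : ℕ) (h : ValidUp l r b) : l < 8 ∧ r < 8 ∧ b < 8 := by
  rcases h with h | h | h <;>
    simp only [basePieces, List.mem_cons, List.not_mem_nil, or_false, Prod.mk.injEq] at h <;>
    obtain (⟨rfl,rfl,rfl⟩|⟨rfl,rfl,rfl⟩|⟨rfl,rfl,rfl⟩|⟨rfl,rfl,rfl⟩|⟨rfl,rfl,rfl⟩|⟨rfl,rfl,rfl⟩|⟨rfl,rfl,rfl⟩|⟨rfl,rfl,rfl⟩) := h <;>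
    exact ⟨by norm_num, by norm_num, by norm_num⟩

lemma equivVert_lt (p q : ℕ) (h : ValidEquivVert p q) : p < 8 ∧ q < 8 := by
  simp only [ValidEquivVert, List.mem_cons, List.not_mem_nil, or_false, Prod.mk.injEq] at h
  obtain (⟨rfl,rfl⟩|⟨rfl,rfl⟩|⟨rfl,rfl⟩|⟨rfl,rfl⟩|⟨rfl,rfl⟩|⟨rfl,rfl⟩|⟨rfl,rfl⟩|⟨rfl,rfl⟩) := h <;>
    exact ⟨by norm_num, by norm_num⟩

/-- Every bottom-border label is one of `0,…,7`. -/
lemma bottom_lt (n : ℕ) (P : GenPuzzle n) (i : ℕ) (hi : i < n) : P.hl i 0 < 8 := by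
  rcases rh_cases (P.rh i 0) with hr | hr | hr | hr
  · exact (validUp_lt _ _ _ (P.up_tri i 0 (by omega) hr)).2.2
  · exact (equivVert_lt _ _ (P.rh_left i 0 hr).2.2.2.2).2
  · exact (equivVert_lt _ _ (P.rh_right i 0 hr).2.2.2).1
  · have := (P.rh_bottom i 0 hr).1; omega

lemma validUp_sum_eq (gL gR gB : ℕ → ℤ)
    (H : ∀ t ∈ basePieces, gL t.1 + gR t.2.1 + gB t.2.2 = 0 ∧
        gL t.2.2 + gR t.1 + gB t.2.1 = 0 ∧ gL t.2.1 + gR t.2.2 + gB t.1 = 0) :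
    ∀ l r b, ValidUp l r b → gL l + gR r + gB b = 0 := by
  intro l r b hv
  rcases hv with hv | hv | hv
  · exact (H _ hv).1
  · exact (H _ hv).2.1
  · exact (H _ hv).2.2

lemma sum_classes (n m : ℕ) (s : ℕ → ℕ) (hs : ∀ i, i < n → s i < m) (g : ℕ → ℤ) :
    ∑ i ∈ range n, g (s i)
      = ∑ k ∈ range m, (((range n).filter (fun i => s i = k)).card : ℤ) * g k := by
  rw [← Finset.sum_fiberwise_of_maps_to (g := s)
      (t := range m) (fun i hi => mem_range.2 (hs i (mem_range.1 hi))) (fun i => g (s i))]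
  refine sum_congr rfl fun k _ => ?_
  calc ∑ i ∈ (range n).filter (fun i => s i = k), g (s i)
      = ∑ _i ∈ (range n).filter (fun i => s i = k), g k :=
        sum_congr rfl fun i hi => by rw [(mem_filter.1 hi).2]
    _ = _ := by rw [sum_const, nsmul_eq_mul]

lemma shift_ext (m : ℕ) (G : ℕ → ℕ → ℤ) :
    ∑ y ∈ range m, ∑ x ∈ range (m - y), G x y
      = ∑ y ∈ range (m + 1), ∑ x ∈ range (m - y), G x y := by
  refine Finset.sum_subset (range_subset_range.2 (Nat.le_succ m)) fun y hy hyn => ?_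
  have hym : m - y = 0 := by
    simp only [mem_range] at hy hyn; omega
  rw [hym]; exact sum_range_zero _

section Key

variable {n : ℕ} (P : GenPuzzle n) (gL gR gB : ℕ → ℤ)

/-- Contribution of the upward cell `(x,y)`. -/
def Tv (x y : ℕ) : ℤ := gL (P.ne x y) + gR (P.nw x y) + gB (P.hl x y)

/-- Contribution of an upward cell that is merged in direction `k`, else `0`. -/
def Av (k : Fin 3) (x y : ℕ) : ℤ :=
  if P.rh x y = some k then Tv P gL gR gB x y else 0

/-- Contribution of the downward cell `(x,y)` (positively oriented). -/
def Dw (x y : ℕ) : ℤ := gR (P.nw x y) + gL (P.ne (x+1) y) + gB (P.hl x (y+1))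

lemma Tv_split (h : ∀ l r b, ValidUp l r b → gL l + gR r + gB b = 0)
    (x y : ℕ) (hxy : x + y < n) :
    Tv P gL gR gB x y
      = Av P gL gR gB 0 (x+1-1) y + Av P gL gR gB 1 x y + Av P gL gR gB 2 x y := by
  have hx1 : x + 1 - 1 = x := by omega
  rw [hx1]
  rcases rh_cases (P.rh x y) with hr | hr | hr | hr
  · have h0 := h _ _ _ (P.up_tri x y hxy hr)
    simp only [Av, hr, reduceCtorEq, if_false, add_zero, zero_add]
    simpa [Tv] using h0
  · simp [Av, hr]
  · simp [Av, hr]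
  · simp [Av, hr]

lemma D_point (h : ∀ l r b, ValidUp l r b → gL l + gR r + gB b = 0)
    (x y : ℕ) (hxy : x + y + 1 < n) :
    Av P gL gR gB 0 (x+1) y + Av P gL gR gB 1 x y + Av P gL gR gB 2 x (y+1)
      = Dw P gL gR gB x y := by
  have honce := P.dn_once x y hxy
  by_cases h1 : P.rh x y = some 1
  · obtain ⟨h0, h2⟩ := honce.1 h1
    obtain ⟨-, hhl, hne, -⟩ := P.rh_right x y h1
    simp only [Av, Dw, Tv, if_neg h0, if_pos h1, if_neg h2, hhl, hne]
    ring
  by_cases h0 : P.rh (x+1) y = some 0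
  · have h2 := honce.2 h0
    obtain ⟨-, -, hnw, hhl, -⟩ := P.rh_left (x+1) y h0
    simp only [Nat.add_sub_cancel] at hnw hhl
    simp only [Av, Dw, Tv, if_pos h0, if_neg h1, if_neg h2, ← hnw, ← hhl]
    ring
  by_cases h2 : P.rh x (y+1) = some 2
  · obtain ⟨-, -, hne, hnw, -⟩ := P.rh_bottom x (y+1) h2
    simp only [Nat.add_sub_cancel] at hne hnw
    simp only [Av, Dw, Tv, if_neg h0, if_neg h1, if_pos h2, hne, hnw]
    ring
  · have hd := P.dn_tri x y hxy h1 h0 h2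
    have h0' := h _ _ _ hd
    simp only [Av, Dw, Tv, if_neg h0, if_neg h1, if_neg h2]
    linarith [h0']

end Key

/-- The discrete Green's theorem: the boundary sum of any conservative
functional vanishes. -/
lemma key (n : ℕ) (P : GenPuzzle n) (gL gR gB : ℕ → ℤ)
    (h : ∀ l r b, ValidUp l r b → gL l + gR r + gB b = 0) :
    ∑ i ∈ range n, (gL (P.ne 0 i) + gR (P.nw i (n - 1 - i)) + gB (P.hl i 0)) = 0 := by
  rcases Nat.eq_zero_or_pos n with rfl | hn
  · simp
  obtain ⟨m, rfl⟩ : ∃ m, n = m + 1 := ⟨n - 1, by omega⟩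
  -- Split the sum over upward cells according to merge status
  have hsplit : ∑ y ∈ range (m+1), ∑ x ∈ range (m+1-y), Tv P gL gR gB x y
      = (∑ y ∈ range (m+1), ∑ x ∈ range (m+1-y), Av P gL gR gB 0 (x+1-1) y)
      + (∑ y ∈ range (m+1), ∑ x ∈ range (m+1-y), Av P gL gR gB 1 x y)
      + (∑ y ∈ range (m+1), ∑ x ∈ range (m+1-y), Av P gL gR gB 2 x y) := by
    rw [← sum_add_distrib, ← sum_add_distrib]
    refine sum_congr rfl fun y hy => ?_
    rw [← sum_add_distrib, ← sum_add_distrib]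
    refine sum_congr rfl fun x hx => ?_
    have hy' := mem_range.1 hy
    have hx' := mem_range.1 hx
    exact Tv_split P gL gR gB h x y (by omega)
  have hA1 : ∑ y ∈ range (m+1), ∑ x ∈ range (m+1-y), Av P gL gR gB 1 x y
      = ∑ y ∈ range (m+1), ∑ x ∈ range (m+1-1-y), Av P gL gR gB 1 x y := by
    refine sum_congr rfl fun y hy => ?_
    have hy' := mem_range.1 hy
    rw [show m + 1 - y = (m + 1 - 1 - y) + 1 by omega, sum_range_succ]
    have hz : Av P gL gR gB 1 (m + 1 - 1 - y) y = 0 := by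
      simp only [Av]
      rw [if_neg]
      intro hr
      have := (P.rh_right _ _ hr).1
      omega
    rw [hz, add_zero]
  have hA0 : ∑ y ∈ range (m+1), ∑ x ∈ range (m+1-y), Av P gL gR gB 0 (x+1-1) y
      = ∑ y ∈ range (m+1), ∑ x ∈ range (m+1-1-y), Av P gL gR gB 0 (x+1) y := by
    refine sum_congr rfl fun y hy => ?_
    have hy' := mem_range.1 hy
    rw [show m + 1 - y = (m + 1 - 1 - y) + 1 by omega, sum_range_succ']
    have hz : Av P gL gR gB 0 (0+1-1) y = 0 := by
      simp only [Av]
      rw [if_neg]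
      intro hr
      have := (P.rh_left _ _ hr).1
      omega
    rw [hz, add_zero]
    exact sum_congr rfl fun k _ => by rw [Nat.add_sub_cancel]
  have hA2 : ∑ y ∈ range (m+1), ∑ x ∈ range (m+1-y), Av P gL gR gB 2 x y
      = ∑ y ∈ range (m+1), ∑ x ∈ range (m+1-1-y), Av P gL gR gB 2 x (y+1) := by
    rw [sum_range_succ']
    have hz : (∑ x ∈ range (m+1-0), Av P gL gR gB 2 x 0) = 0 := by
      refine sum_eq_zero fun x hx => ?_
      simp only [Av]
      rw [if_neg]
      intro hr
      have := (P.rh_bottom _ _ hr).1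
      omega
    rw [hz, add_zero]
    rw [sum_congr rfl (fun y _ => by rw [show m + 1 - (y+1) = m - y by omega] :
        ∀ y ∈ range m, ∑ x ∈ range (m+1-(y+1)), Av P gL gR gB 2 x (y+1)
          = ∑ x ∈ range (m - y), Av P gL gR gB 2 x (y+1))]
    rw [shift_ext m (fun x y => Av P gL gR gB 2 x (y+1))]
    exact sum_congr rfl fun y _ => by rw [show m + 1 - 1 - y = m - y by omega]
  -- the downward-cell matching
  have hmatch : ∑ y ∈ range (m+1), ∑ x ∈ range (m+1-1-y),
        (Av P gL gR gB 0 (x+1) y + Av P gL gR gB 1 x y + Av P gL gR gB 2 x (y+1))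
      = ∑ y ∈ range (m+1), ∑ x ∈ range (m+1-1-y), Dw P gL gR gB x y := by
    refine sum_congr rfl fun y hy => sum_congr rfl fun x hx => ?_
    have hy' := mem_range.1 hy
    have hx' := mem_range.1 hx
    exact D_point P gL gR gB h x y (by omega)
  have hSUSD : ∑ y ∈ range (m+1), ∑ x ∈ range (m+1-y), Tv P gL gR gB x y
      = ∑ y ∈ range (m+1), ∑ x ∈ range (m+1-1-y), Dw P gL gR gB x y := by
    rw [hsplit, hA0, hA1, hA2, ← hmatch, ← sum_add_distrib, ← sum_add_distrib]
    refine sum_congr rfl fun y _ => ?_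
    rw [← sum_add_distrib, ← sum_add_distrib]
  -- letterwise expansions
  have hSU : ∑ y ∈ range (m+1), ∑ x ∈ range (m+1-y), Tv P gL gR gB x y
      = (∑ y ∈ range (m+1), ∑ x ∈ range (m+1-y), gL (P.ne x y))
      + (∑ y ∈ range (m+1), ∑ x ∈ range (m+1-y), gR (P.nw x y))
      + (∑ y ∈ range (m+1), ∑ x ∈ range (m+1-y), gB (P.hl x y)) := by
    simp only [Tv, sum_add_distrib]
  have hSD : ∑ y ∈ range (m+1), ∑ x ∈ range (m+1-1-y), Dw P gL gR gB x y
      = (∑ y ∈ range (m+1), ∑ x ∈ range (m+1-1-y), gR (P.nw x y))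
      + (∑ y ∈ range (m+1), ∑ x ∈ range (m+1-1-y), gL (P.ne (x+1) y))
      + (∑ y ∈ range (m+1), ∑ x ∈ range (m+1-1-y), gB (P.hl x (y+1))) := by
    simp only [Dw, sum_add_distrib]
  have hL : ∑ y ∈ range (m+1), ∑ x ∈ range (m+1-y), gL (P.ne x y)
      = (∑ y ∈ range (m+1), gL (P.ne 0 y))
      + ∑ y ∈ range (m+1), ∑ x ∈ range (m+1-1-y), gL (P.ne (x+1) y) := by
    rw [← sum_add_distrib]
    refine sum_congr rfl fun y hy => ?_
    have hy' := mem_range.1 hy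
    rw [show m + 1 - y = (m + 1 - 1 - y) + 1 by omega, sum_range_succ']
    exact add_comm _ _
  have hR : ∑ y ∈ range (m+1), ∑ x ∈ range (m+1-y), gR (P.nw x y)
      = (∑ y ∈ range (m+1), gR (P.nw (m+1-1-y) y))
      + ∑ y ∈ range (m+1), ∑ x ∈ range (m+1-1-y), gR (P.nw x y) := by
    rw [← sum_add_distrib]
    refine sum_congr rfl fun y hy => ?_
    have hy' := mem_range.1 hy
    rw [show m + 1 - y = (m + 1 - 1 - y) + 1 by omega, sum_range_succ]
    exact add_comm _ _
  have hB : ∑ y ∈ range (m+1), ∑ x ∈ range (m+1-y), gB (P.hl x y)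
      = (∑ x ∈ range (m+1), gB (P.hl x 0))
      + ∑ y ∈ range (m+1), ∑ x ∈ range (m+1-1-y), gB (P.hl x (y+1)) := by
    rw [sum_range_succ']
    rw [sum_congr rfl (fun y _ => by rw [show m + 1 - (y+1) = m - y by omega] :
        ∀ y ∈ range m, ∑ x ∈ range (m+1-(y+1)), gB (P.hl x (y+1))
          = ∑ x ∈ range (m - y), gB (P.hl x (y+1)))]
    rw [shift_ext m (fun x y => gB (P.hl x (y+1)))]
    rw [sum_congr rfl (fun y _ => by rw [show m - y = m + 1 - 1 - y by omega] :
        ∀ y ∈ range (m+1), ∑ x ∈ range (m - y), gB (P.hl x (y+1))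
          = ∑ x ∈ range (m+1-1-y), gB (P.hl x (y+1)))]
    rw [show m + 1 - 0 = m + 1 by omega]
    exact add_comm _ _
  -- boundary reshaping
  have hgoal : ∑ i ∈ range (m+1),
        (gL (P.ne 0 i) + gR (P.nw i (m+1-1-i)) + gB (P.hl i 0))
      = (∑ i ∈ range (m+1), gL (P.ne 0 i))
      + (∑ i ∈ range (m+1), gR (P.nw i (m+1-1-i)))
      + (∑ i ∈ range (m+1), gB (P.hl i 0)) := by
    simp only [sum_add_distrib]
  have hrefl : ∑ i ∈ range (m+1), gR (P.nw i (m+1-1-i))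
      = ∑ y ∈ range (m+1), gR (P.nw (m+1-1-y) y) := by
    rw [← Finset.sum_range_reflect (fun y => gR (P.nw (m+1-1-y) y)) (m+1)]
    refine sum_congr rfl fun j hj => ?_
    have hj' := mem_range.1 hj
    rw [show m + 1 - 1 - (m + 1 - 1 - j) = j by omega]
  rw [hgoal, hrefl]
  rw [hSU, hSD] at hSUSD
  linarith [hSUSD, hL, hR, hB]

/-- A finitely-supported weight function given by its eight values. -/
def mkfun (v0 v1 v2 v3 v4 v5 v6 v7 : ℤ) : ℕ → ℤ := fun k =>
  if k = 0 then v0 else if k = 1 then v1 else if k = 2 then v2 else if k = 3 then v3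
  else if k = 4 then v4 else if k = 5 then v5 else if k = 6 then v6 else if k = 7 then v7
  else 0

lemma boundary_counts (n a b : ℕ) (P : GenPuzzle n)
    (hu : Is012 n a b fun i => P.ne 0 i) (hv : Is012 n a b fun i => P.nw i (n - 1 - i))
    (gL gR gB : ℕ → ℤ)
    (H : ∀ t ∈ basePieces, gL t.1 + gR t.2.1 + gB t.2.2 = 0 ∧
        gL t.2.2 + gR t.1 + gB t.2.1 = 0 ∧ gL t.2.1 + gR t.2.2 + gB t.1 = 0) :
    (a : ℤ) * (gL 0 + gR 0) + ((b - a : ℕ) : ℤ) * (gL 1 + gR 1)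
      + ((n - b : ℕ) : ℤ) * (gL 2 + gR 2)
      + ∑ k ∈ range 8, (((range n).filter (fun i => P.hl i 0 = k)).card : ℤ) * gB k
      = 0 := by
  have hkey := key n P gL gR gB (validUp_sum_eq gL gR gB H)
  rw [sum_add_distrib, sum_add_distrib] at hkey
  have hcu := sum_classes n 3 (fun i => P.ne 0 i) hu.1 gL
  have hcv := sum_classes n 3 (fun i => P.nw i (n - 1 - i)) hv.1 gR
  have hcw := sum_classes n 8 (fun i => P.hl i 0) (fun i hi => bottom_lt n P i hi) gB
  rw [hcu, hcv, hcw] at hkey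
  simp only [sum_range_succ, sum_range_zero, zero_add] at hkey ⊢
  rw [hu.2.1, hu.2.2.1, hu.2.2.2, hv.2.1, hv.2.2.1, hv.2.2.2] at hkey
  linear_combination hkey

end Aux

theorem bottom_border_is_012 (n a b : ℕ) (hab : a ≤ b) (hbn : b ≤ n)
    (P : GenPuzzle n)
    (hu : Is012 n a b fun i => P.ne 0 i)
    (hv : Is012 n a b fun i => P.nw i (n - 1 - i)) :
    Is012 n a b fun i => P.hl i 0 := by
  classical
  have hw8 : ∀ i, i < n → P.hl i 0 < 8 := fun i hi => bottom_lt n P i hi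
  have E2 := boundary_counts n a b P hu hv
    (mkfun (-1) (-1) (-2) (-1) (-1) (-1) (-1) 0)
    (mkfun 0 0 1 0 1 1 1 0)
    (mkfun 1 1 1 1 0 0 0 0) (by decide)
  have E3 := boundary_counts n a b P hu hv
    (mkfun 0 (-1) (-1) 0 (-1) 0 (-1) 0)
    (mkfun (-1) 0 0 0 0 0 1 0)
    (mkfun 1 1 1 0 1 0 0 0) (by decide)
  have E4 := boundary_counts n a b P hu hv
    (mkfun 0 1 1 1 0 0 1 0)
    (mkfun 0 0 (-1) (-1) 0 (-1) (-1) 0)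
    (mkfun 0 (-1) 0 0 0 1 0 0) (by decide)
  have E5 := boundary_counts n a b P hu hv
    (mkfun 1 1 1 0 1 0 0 0)
    (mkfun 0 (-1) (-1) 0 (-1) 0 (-1) 0)
    (mkfun (-1) 0 0 0 0 0 1 0) (by decide)
  have E6 := boundary_counts n a b P hu hv
    (mkfun (-1) (-1) 0 (-1) 0 0 0 (-1))
    (mkfun 1 1 1 1 0 0 0 0)
    (mkfun 0 0 (-1) 0 0 0 0 1) (by decide)
  have Etot : (n : ℤ) = ∑ k ∈ Finset.range 8,
      (((Finset.range n).filter (fun i => P.hl i 0 = k)).card : ℤ) * 1 := by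
    have h := sum_classes n 8 (fun i => P.hl i 0) hw8 (fun _ => (1:ℤ))
    simpa using h
  simp only [Finset.sum_range_succ, Finset.sum_range_zero, mkfun] at E2 E3 E4 E5 E6 Etot
  norm_num at E2 E3 E4 E5 E6 Etot
  refine ⟨?_, ?_, ?_, ?_⟩
  · intro i hi
    show @LT.lt ℕ _ (P.hl i 0) 3
    have h8 : @LT.lt ℕ _ (P.hl i 0) 8 := hw8 i hi
    have hmem : ∀ k : ℕ, ((Finset.range n).filter (fun i => P.hl i 0 = k)).card = 0 →
        @Ne ℕ (P.hl i 0) k := by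
      intro k hk hek
      have hmem' : i ∈ (Finset.range n).filter (fun i => P.hl i 0 = k) :=
        Finset.mem_filter.2 ⟨Finset.mem_range.2 hi, hek⟩
      rw [Finset.card_eq_zero.mp hk] at hmem'
      exact absurd hmem' (Finset.notMem_empty i)
    have h3 := hmem 3 (by omega)
    have h4 := hmem 4 (by omega)
    have h5 := hmem 5 (by omega)
    have h6 := hmem 6 (by omega)
    have h7 := hmem 7 (by omega)
    omega
  · show ((Finset.range n).filter (fun i => P.hl i 0 = 0)).card = a
    omega
  · show ((Finset.range n).filter (fun i => P.hl i 0 = 1)).card = b - a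
    omega
  · show ((Finset.range n).filter (fun i => P.hl i 0 = 2)).card = n - b
    omega
end

section
/- Let w be a 012-string for Fl(a,b;n) and let P be an equivariant puzzle for Fl(a,b;n) with boundary Δ^{w,w}_w. Then every edge of P parallel to the left border segment or to the right border segment carries a simple label; consequently every small vertical rhombus in the dissection of P has simple labels on all four of its border edges. -/
/-!
STATEMENT 18: Let w be a 012-string for Fl(a,b;n) and P an equivariant
puzzle with boundary Δ^{w,w}_w.  Then every edge of P parallel to the left
or right border segment carries a simple label; consequently every small
vertical rhombus of P has simple labels on all four border edges.
-/

set_option maxHeartbeats 1000000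

open scoped Classical

/-- An equivariant puzzle for `Fl(a,b;n)` (an upward triangle of size `n`,
all equivariant pieces vertical), encoded through its dissection into `n`
bottom-row triangles and `n(n-1)/2` small vertical rhombi.  We use skewed
coordinates: `ne x y` is the label of the SW–NE edge from `(x, y)` to
`(x, y+1)` (the left side of the upward cell `(x, y)`), `nw x y` the label
of the NW–SE edge from `(x+1, y)` to `(x, y+1)` (its right side), and
`hl x y` the label of the horizontal edge from `(x, y)` to `(x+1, y)` (its
bottom side; this value is meaningless when the vertical rhombus containing
it is an equivariant piece).  `isEq x y` records whether the vertical
rhombus whose upward half is the cell `(x, y)` (for `1 ≤ y`,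
`x + y < n`) is an equivariant puzzle piece; otherwise this rhombus consists
of two triangular pieces.  The left, right and bottom border segments are
formed by the edges `ne 0 i`, `nw i (n-1-i)` and `hl i 0` for `i < n`. -/
structure EqvPuzzle (n : ℕ) where
  ne : ℕ → ℕ → Label
  nw : ℕ → ℕ → Label
  hl : ℕ → ℕ → Label
  isEq : ℕ → ℕ → Bool
  bottom_valid : ∀ x, x < n → ValidUp (ne x 0) (nw x 0) (hl x 0)
  rhombus_equiv : ∀ x y, 1 ≤ y → x + y < n → isEq x y = true →
    ne x y = ne (x+1) (y-1) ∧ nw x y = nw x (y-1) ∧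
    ValidEquivVert (ne x y) (nw x y)
  rhombus_tri : ∀ x y, 1 ≤ y → x + y < n → isEq x y = false →
    ValidUp (ne x y) (nw x y) (hl x y) ∧
    ValidDown (nw x (y-1)) (ne (x+1) (y-1)) (hl x y)
  boundary_simple :
    (∀ i, i < n → ne 0 i < 3) ∧ (∀ i, i < n → nw i (n-1-i) < 3) ∧
    (∀ i, i < n → hl i 0 < 3)

/-- `P` has boundary `△^{u,v}_w`: `u`, `v` and `w` are the strings of labels
on the left, right and bottom border segments, all read in left-to-right
order (bottom-to-top on the left border, top-to-bottom on the right one). -/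
def HasBoundary {n : ℕ} (P : EqvPuzzle n) (u v w : ℕ → ℕ) : Prop :=
  (∀ i, i < n → P.ne 0 i = u i) ∧
  (∀ i, i < n → P.nw i (n-1-i) = v i) ∧
  (∀ i, i < n → P.hl i 0 = w i)


/-! ### Auxiliary local facts, proved by finite case analysis -/

/-- All valid upward triangles, as an explicit list. -/
def L18 : List (ℕ × ℕ × ℕ) :=
  [(0,0,0),(0,1,3),(0,2,5),(0,4,7),(1,1,1),(1,2,4),(1,3,0),(2,2,2),(2,4,1),
   (2,5,0),(2,6,3),(3,0,1),(3,2,6),(4,1,2),(4,7,0),(5,0,2),(6,3,2),(7,0,4)]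

/-- Mass of a label (a certificate weight). -/
def mV : ℕ → ℕ
  | 1 => 1 | 2 => 2 | 3 => 1 | 4 => 2 | 5 => 2 | 6 => 3 | 7 => 1 | _ => 0

/-- State potential of a label: zero exactly on simple labels (among 0–7). -/
def ch : ℕ → ℕ
  | 3 => 1 | 4 => 1 | 5 => 2 | 6 => 2 | 7 => 2 | _ => 0

lemma validUp_mem {l r b : ℕ} (h : ValidUp l r b) : (l, r, b) ∈ L18 := by
  rcases h with h | h | h <;> fin_cases h <;> decide

lemma tri_ineq' : ∀ p ∈ L18, ∀ q ∈ L18, p.2.2 = q.2.2 →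
    mV p.1 + ch q.2.1 ≤ mV q.1 + ch p.2.1 := by decide

lemma tri_ineq {u t' h o t : ℕ} (h1 : ValidUp u t' h) (h2 : ValidUp o t h) :
    mV u + ch t ≤ mV o + ch t' :=
  tri_ineq' _ (validUp_mem h1) _ (validUp_mem h2) rfl

lemma bot_ineq' : ∀ p ∈ L18, p.2.2 < 3 → mV p.1 ≤ mV p.2.2 + ch p.2.1 := by decide

lemma bot_ineq {u t s : ℕ} (h1 : ValidUp u t s) (hs : s < 3) :
    mV u ≤ mV s + ch t := bot_ineq' _ (validUp_mem h1) hs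

lemma last_forced' : ∀ p ∈ L18, p.2.1 = p.2.2 → p.2.2 < 3 → p.1 = p.2.2 := by decide

lemma last_forced {l s : ℕ} (h : ValidUp l s s) (hs : s < 3) : l = s :=
  last_forced' _ (validUp_mem h) rfl hs

lemma allSimple_const' : ∀ p ∈ L18, p.1 < 3 → p.2.1 < 3 → p.2.2 < 3 →
    p.1 = p.2.2 ∧ p.2.1 = p.2.2 := by decide

lemma allSimple_const {l r b : ℕ} (h : ValidUp l r b) (h1 : l < 3) (h2 : r < 3)
    (h3 : b < 3) : l = b ∧ r = b := allSimple_const' _ (validUp_mem h) h1 h2 h3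

lemma mono_lem' : ∀ p ∈ L18, ∀ q ∈ L18, p.2.2 = q.2.2 → p.1 < 3 → q.2.1 < 3 →
    p.2.1 < 3 → q.2.1 ≤ p.2.1 := by decide

lemma mono_lem {u t' h o t : ℕ} (h1 : ValidUp u t' h) (h2 : ValidUp o t h)
    (hu : u < 3) (ht : t < 3) (ht' : t' < 3) : t ≤ t' :=
  mono_lem' _ (validUp_mem h1) _ (validUp_mem h2) rfl hu ht ht'

lemma out_simple' : ∀ p ∈ L18, ∀ q ∈ L18, p.2.2 = q.2.2 → p.1 < 3 → q.2.1 < 3 →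
    p.2.1 < 3 → q.2.1 = p.2.1 → q.1 < 3 := by decide

lemma out_simple {u t' h o t : ℕ} (h1 : ValidUp u t' h) (h2 : ValidUp o t h)
    (hu : u < 3) (ht : t < 3) (ht' : t' < 3) (heq : t = t') : o < 3 :=
  out_simple' _ (validUp_mem h1) _ (validUp_mem h2) rfl hu ht ht' heq

lemma validUp_le7' : ∀ p ∈ L18, p.1 ≤ 7 ∧ p.2.1 ≤ 7 ∧ p.2.2 ≤ 7 := by decide

lemma validUp_le7 {l r b : ℕ} (h : ValidUp l r b) : l ≤ 7 ∧ r ≤ 7 ∧ b ≤ 7 :=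
  validUp_le7' _ (validUp_mem h)

lemma evV_le7 {p q : ℕ} (h : ValidEquivVert p q) : q ≤ 7 ∧ p ≤ 7 := by
  unfold ValidEquivVert at h; fin_cases h <;> decide

lemma ch_simple {s : ℕ} (h : s < 3) : ch s = 0 := by
  interval_cases s <;> rfl

lemma ch_zero {l : ℕ} (h7 : l ≤ 7) (h0 : ch l = 0) : l < 3 := by
  interval_cases l <;> simp_all [ch]

theorem www_edges_simple (n a b : ℕ) (hab : a ≤ b) (hbn : b ≤ n)
    (w : ℕ → ℕ) (hw : Is012 n a b w)
    (P : EqvPuzzle n) (hP : HasBoundary P w w w) :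
    (∀ x y, x + y < n → P.ne x y < 3 ∧ P.nw x y < 3) ∧
    (∀ x y, 1 ≤ y → x + y < n →
      P.ne x y < 3 ∧ P.nw x y < 3 ∧ P.nw x (y-1) < 3 ∧ P.ne (x+1) (y-1) < 3) := by
  obtain ⟨hw3, -, -, -⟩ := hw
  obtain ⟨hbL, hbR, hbB⟩ := hP
  -- ### Phase 1: all `nw` edges (states of the column automaton) are simple.
  -- Column inequality for the potential `G x = ∑ 2^y * mV (ne x y)`.
  have col : ∀ x, x + 1 < n →
      (∑ y ∈ Finset.range (n - x), 2 ^ y * mV (P.ne x y)) +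
        ∑ z ∈ Finset.range (n - x - 1), ch (P.nw x z) ≤
      2 * (∑ y ∈ Finset.range (n - (x + 1)), 2 ^ y * mV (P.ne (x + 1) y)) + mV (w x) := by
    intro x hx
    have hxn : x < n := by omega
    have hm : n - x = (n - x - 1) + 1 := by omega
    rw [show n - (x + 1) = n - x - 1 from by omega]
    set m := n - x - 1 with hmdef
    -- pointwise inequality coming from each small vertical rhombus
    have key : ∀ y ∈ Finset.range m,
        2 ^ (y + 1) * (mV (P.ne x (y + 1)) + ch (P.nw x y)) ≤
        2 ^ (y + 1) * (mV (P.ne (x + 1) y) + ch (P.nw x (y + 1))) := by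
      intro y hy
      have hy0 : y < m := Finset.mem_range.mp hy
      have hy' : x + (y + 1) < n := by omega
      have hy1 : 1 ≤ y + 1 := by omega
      cases hEq : P.isEq x (y + 1) with
      | false =>
        obtain ⟨hUp, hDn⟩ := P.rhombus_tri x (y + 1) hy1 hy' hEq
        rw [Nat.add_sub_cancel] at hDn
        have hDn' : ValidUp (P.ne (x + 1) y) (P.nw x y) (P.hl x (y + 1)) := hDn
        exact Nat.mul_le_mul_left _ (tri_ineq hUp hDn')
      | true =>
        obtain ⟨e1, e2, -⟩ := P.rhombus_equiv x (y + 1) hy1 hy' hEq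
        rw [Nat.add_sub_cancel] at e1 e2
        rw [e1, e2]
    have hkey := Finset.sum_le_sum key
    have hsplitL : (∑ y ∈ Finset.range m,
        2 ^ (y + 1) * (mV (P.ne x (y + 1)) + ch (P.nw x y))) =
        (∑ y ∈ Finset.range m, 2 ^ (y + 1) * mV (P.ne x (y + 1))) +
        ∑ y ∈ Finset.range m, 2 ^ (y + 1) * ch (P.nw x y) := by
      rw [← Finset.sum_add_distrib]
      exact Finset.sum_congr rfl fun y _ => by ring
    have hsplitR : (∑ y ∈ Finset.range m,
        2 ^ (y + 1) * (mV (P.ne (x + 1) y) + ch (P.nw x (y + 1)))) =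
        (∑ y ∈ Finset.range m, 2 ^ (y + 1) * mV (P.ne (x + 1) y)) +
        ∑ y ∈ Finset.range m, 2 ^ (y + 1) * ch (P.nw x (y + 1)) := by
      rw [← Finset.sum_add_distrib]
      exact Finset.sum_congr rfl fun y _ => by ring
    rw [hsplitL, hsplitR] at hkey
    -- unfold the first sum of the goal
    have hGx : (∑ y ∈ Finset.range (n - x), 2 ^ y * mV (P.ne x y)) =
        (∑ y ∈ Finset.range m, 2 ^ (y + 1) * mV (P.ne x (y + 1))) + mV (P.ne x 0) := by
      rw [hm, Finset.sum_range_succ', pow_zero, one_mul]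
    -- doubling identities
    have hB : (∑ y ∈ Finset.range m, 2 ^ (y + 1) * ch (P.nw x y)) =
        2 * ∑ y ∈ Finset.range m, 2 ^ y * ch (P.nw x y) := by
      rw [Finset.mul_sum]
      exact Finset.sum_congr rfl fun y _ => by ring
    have hC : (∑ y ∈ Finset.range m, 2 ^ (y + 1) * mV (P.ne (x + 1) y)) =
        2 * ∑ y ∈ Finset.range m, 2 ^ y * mV (P.ne (x + 1) y) := by
      rw [Finset.mul_sum]
      exact Finset.sum_congr rfl fun y _ => by ring
    -- telescoping of the state potentials
    have htop : ch (P.nw x m) = 0 := by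
      have hb := hbR x hxn
      rw [show m = n - 1 - x from by omega, hb]
      exact ch_simple (hw3 x hxn)
    have hUa : (∑ z ∈ Finset.range (m + 1), 2 ^ z * ch (P.nw x z)) =
        (∑ z ∈ Finset.range m, 2 ^ z * ch (P.nw x z)) + 2 ^ m * ch (P.nw x m) :=
      Finset.sum_range_succ _ m
    rw [htop, mul_zero, add_zero] at hUa
    have hUb : (∑ z ∈ Finset.range (m + 1), 2 ^ z * ch (P.nw x z)) =
        (∑ z ∈ Finset.range m, 2 ^ (z + 1) * ch (P.nw x (z + 1))) + ch (P.nw x 0) := by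
      rw [Finset.sum_range_succ', pow_zero, one_mul]
    have hT : (∑ z ∈ Finset.range m, 2 ^ z * ch (P.nw x z)) =
        (∑ z ∈ Finset.range m, 2 ^ (z + 1) * ch (P.nw x (z + 1))) + ch (P.nw x 0) := by
      rw [← hUa, hUb]
    -- the plain sum of potentials is dominated by the weighted one
    have hXT : (∑ z ∈ Finset.range m, ch (P.nw x z)) ≤
        ∑ z ∈ Finset.range m, 2 ^ z * ch (P.nw x z) := by
      refine Finset.sum_le_sum fun z _ => ?_
      calc ch (P.nw x z) = 1 * ch (P.nw x z) := (one_mul _).symm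
        _ ≤ 2 ^ z * ch (P.nw x z) := Nat.mul_le_mul_right _ Nat.one_le_two_pow
    -- bottom triangle
    have hbot : mV (P.ne x 0) ≤ mV (w x) + ch (P.nw x 0) := by
      have h := P.bottom_valid x hxn
      rw [hbB x hxn] at h
      exact bot_ineq h (hw3 x hxn)
    omega
  -- The baseline potential computed from `w`.
  have base : ∀ x, x + 1 < n →
      (∑ j ∈ Finset.range (n - x), 2 ^ j * mV (w (x + j))) =
      (2 * ∑ j ∈ Finset.range (n - (x + 1)), 2 ^ j * mV (w (x + 1 + j))) + mV (w x) := by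
    intro x hx
    rw [show n - x = (n - (x + 1)) + 1 from by omega, Finset.sum_range_succ']
    congr 1
    · rw [Finset.mul_sum]
      refine Finset.sum_congr rfl fun j _ => ?_
      have hj : x + (j + 1) = x + 1 + j := by omega
      rw [hj]; ring
    · rw [pow_zero, one_mul, Nat.add_zero]
  -- The two potentials agree at both ends.
  have endG : 0 < n → (∑ y ∈ Finset.range (n - (n - 1)), 2 ^ y * mV (P.ne (n - 1) y)) =
      ∑ j ∈ Finset.range (n - (n - 1)), 2 ^ j * mV (w (n - 1 + j)) := by
    intro hn
    have hn1 : n - 1 < n := by omega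
    rw [show n - (n - 1) = 1 from by omega]
    rw [Finset.sum_range_one, Finset.sum_range_one, pow_zero, one_mul, one_mul]
    have h := P.bottom_valid (n - 1) hn1
    rw [hbB (n - 1) hn1] at h
    have hr : P.nw (n - 1) 0 = w (n - 1) := by
      have h2 := hbR (n - 1) hn1
      rwa [show n - 1 - (n - 1) = 0 from by omega] at h2
    rw [hr] at h
    rw [last_forced h (hw3 (n - 1) hn1), Nat.add_zero]
  -- Forward induction: the actual potential dominates the baseline.
  have F : ∀ x, x < n → (∑ j ∈ Finset.range (n - x), 2 ^ j * mV (w (x + j))) ≤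
      ∑ y ∈ Finset.range (n - x), 2 ^ y * mV (P.ne x y) := by
    intro x
    induction x with
    | zero =>
      intro _
      refine le_of_eq (Finset.sum_congr rfl fun y hy => ?_)
      have hy' : y < n := by
        have := Finset.mem_range.mp hy; omega
      rw [Nat.zero_add, hbL y hy']
    | succ x ih =>
      intro hx1
      have hx0 : x < n := by omega
      have h1 := col x hx1
      have h2 := base x hx1
      have h3 := ih hx0
      omega
  -- Backward induction: the baseline dominates the actual potential.
  have Bk : ∀ k x, x + k + 1 = n → (∑ y ∈ Finset.range (n - x), 2 ^ y * mV (P.ne x y)) ≤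
      ∑ j ∈ Finset.range (n - x), 2 ^ j * mV (w (x + j)) := by
    intro k
    induction k with
    | zero =>
      intro x hx
      have hx' : x = n - 1 := by omega
      subst hx'
      have hn : 0 < n := by omega
      exact le_of_eq (endG hn)
    | succ k ih =>
      intro x hx
      have hx1 : x + 1 < n := by omega
      have hx2 : x + 1 + k + 1 = n := by omega
      have h1 := col x hx1
      have h2 := base x hx1
      have h3 := ih (x + 1) hx2
      omega
  -- Hence all the state potentials vanish.
  have hXzero : ∀ x, x + 1 < n → ∀ z, z < n - x - 1 → ch (P.nw x z) = 0 := by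
    intro x hx
    have hx0 : x < n := by omega
    have hk1 : x + (n - x - 1) + 1 = n := by omega
    have hk2 : (x + 1) + (n - x - 2) + 1 = n := by omega
    have h1 := col x hx
    have h2 := base x hx
    have e1a := F x hx0
    have e1b := Bk (n - x - 1) x hk1
    have e2a := F (x + 1) hx
    have e2b := Bk (n - x - 2) (x + 1) hk2
    have hsum : (∑ z ∈ Finset.range (n - x - 1), ch (P.nw x z)) = 0 := by omega
    intro z hz
    exact (Finset.sum_eq_zero_iff.mp hsum) z (Finset.mem_range.mpr hz)
  -- Every `nw` edge label is at most 7.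
  have nw_le7 : ∀ x y, x + y < n → P.nw x y ≤ 7 := by
    intro x y hxy
    cases y with
    | zero =>
      have hx0 : x < n := by omega
      exact (validUp_le7 (P.bottom_valid x hx0)).2.1
    | succ z =>
      have hz1 : 1 ≤ z + 1 := by omega
      have hz2 : x + (z + 1) < n := hxy
      cases hEq : P.isEq x (z + 1) with
      | true =>
        obtain ⟨-, -, hv⟩ := P.rhombus_equiv x (z + 1) hz1 hz2 hEq
        exact (evV_le7 hv).1
      | false =>
        obtain ⟨hUp, -⟩ := P.rhombus_tri x (z + 1) hz1 hz2 hEq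
        exact (validUp_le7 hUp).2.1
  -- All `nw` edges are simple.
  have nwSimple : ∀ x y, x + y < n → P.nw x y < 3 := by
    intro x y hxy
    by_cases htop : x + y + 1 = n
    · have hy : y = n - 1 - x := by omega
      have hx0 : x < n := by omega
      rw [hy, hbR x hx0]
      exact hw3 x hx0
    · have hx1 : x + 1 < n := by omega
      have hz : y < n - x - 1 := by omega
      exact ch_zero (nw_le7 x y hxy) (hXzero x hx1 y hz)
  -- ### Phase 2: all `ne` edges are simple, by induction on columns.
  have neSimple : ∀ x y, x + y < n → P.ne x y < 3 := by
    intro x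
    induction x with
    | zero =>
      intro y hy
      have hy0 : y < n := by omega
      rw [hbL y hy0]
      exact hw3 y hy0
    | succ x ih =>
      intro y hy
      have hxn : x < n := by omega
      have hwx : w x < 3 := hw3 x hxn
      -- the bottom triangle of column x is constant
      have hbt := P.bottom_valid x hxn
      rw [hbB x hxn] at hbt
      have hx0 : x + 0 < n := by omega
      have hne0 : P.ne x 0 < 3 := ih 0 hx0
      have hnw0 : P.nw x 0 < 3 := nwSimple x 0 hx0
      have hc := allSimple_const hbt hne0 hnw0 hwx
      -- the states of column x are monotone, hence constant
      have mono : ∀ z, x + (z + 1) < n → P.nw x z ≤ P.nw x (z + 1) := by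
        intro z hz
        have hz1 : 1 ≤ z + 1 := by omega
        have hzx : x + z < n := by omega
        cases hEq : P.isEq x (z + 1) with
        | true =>
          obtain ⟨-, e2, -⟩ := P.rhombus_equiv x (z + 1) hz1 hz hEq
          rw [Nat.add_sub_cancel] at e2
          exact le_of_eq e2.symm
        | false =>
          obtain ⟨hUp, hDn⟩ := P.rhombus_tri x (z + 1) hz1 hz hEq
          rw [Nat.add_sub_cancel] at hDn
          have hDn' : ValidUp (P.ne (x + 1) z) (P.nw x z) (P.hl x (z + 1)) := hDn
          have hu : P.ne x (z + 1) < 3 := ih (z + 1) hz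
          have ht : P.nw x z < 3 := nwSimple x z hzx
          have ht' : P.nw x (z + 1) < 3 := nwSimple x (z + 1) hz
          exact mono_lem hUp hDn' hu ht ht'
      have upb : ∀ k z, x + z + k + 1 = n → P.nw x z ≤ w x := by
        intro k
        induction k with
        | zero =>
          intro z hz
          have hz' : z = n - 1 - x := by omega
          rw [hz', hbR x hxn]
        | succ k ihk =>
          intro z hz
          have hz1 : x + (z + 1) < n := by omega
          have hz2 : x + (z + 1) + k + 1 = n := by omega
          exact le_trans (mono z hz1) (ihk (z + 1) hz2)
      have lowb : ∀ z, x + z < n → w x ≤ P.nw x z := by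
        intro z
        induction z with
        | zero =>
          intro _
          rw [hc.2]
        | succ z ihz =>
          intro hz
          have hz0 : x + z < n := by omega
          exact le_trans (ihz hz0) (mono z hz)
      have st : ∀ z, x + z < n → P.nw x z = w x := by
        intro z hz
        have hk : x + z + (n - (x + z) - 1) + 1 = n := by omega
        exact le_antisymm (upb (n - (x + z) - 1) z hk) (lowb z hz)
      -- now the output edge `ne (x+1) y` is simple
      have hy1 : 1 ≤ y + 1 := by omega
      have hy2 : x + (y + 1) < n := by omega
      have hyx : x + y < n := by omega
      cases hEq : P.isEq x (y + 1) with
      | true =>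
        obtain ⟨e1, -, -⟩ := P.rhombus_equiv x (y + 1) hy1 hy2 hEq
        rw [Nat.add_sub_cancel] at e1
        rw [← e1]
        exact ih (y + 1) hy2
      | false =>
        obtain ⟨hUp, hDn⟩ := P.rhombus_tri x (y + 1) hy1 hy2 hEq
        rw [Nat.add_sub_cancel] at hDn
        have hDn' : ValidUp (P.ne (x + 1) y) (P.nw x y) (P.hl x (y + 1)) := hDn
        have ht := st y hyx
        have ht' := st (y + 1) hy2
        have hu : P.ne x (y + 1) < 3 := ih (y + 1) hy2
        have h3 : P.nw x y < 3 := by rw [ht]; exact hwx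
        have h3' : P.nw x (y + 1) < 3 := by rw [ht']; exact hwx
        have heq : P.nw x y = P.nw x (y + 1) := by rw [ht, ht']
        exact out_simple hUp hDn' hu h3 h3' heq
  -- ### Conclusion
  constructor
  · intro x y h
    exact ⟨neSimple x y h, nwSimple x y h⟩
  · intro x y h1 h2
    have ha : x + (y - 1) < n := by omega
    have hb : (x + 1) + (y - 1) < n := by omega
    exact ⟨neSimple x y h2, nwSimple x y h2, nwSimple x (y - 1) ha, neSimple (x + 1) (y - 1) hb⟩
end
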